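/- arXiv:2201.12522 — 2 statements merged into one kernel-verified Lean document; each statement's English description precedes it below -/
import Mathlib

section
/- Let H̄ be a symmetric positive definite n×n matrix. Then the matrix P = (n / trace(H̄^{-1})) · H̄^{-1} is symmetric positive definite, satisfies trace(P) = n, and the largest eigenvalue of PH̄ equals n / trace(H̄^{-1}), which is the minimum possible largest eigenvalue of PH̄ over all symmetric positive definite P commuting with H̄ (sharing eigenvectors with H̄) with trace(P) = n. -/
open Matrix

section Aux

variable {m : Type*} [Fintype m] [DecidableEq m]

open scoped MatrixOrder

lemma psd_diag_nonneg {A : Matrix m m ℝ} (hA : A.PosSemidef) (i : m) : 0 ≤ A i i := by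
  have := hA.dotProduct_mulVec_nonneg (Pi.single i 1)
  simpa [dotProduct, mulVec, Pi.single_apply] using this

lemma psd_trace_nonneg {A : Matrix m m ℝ} (hA : A.PosSemidef) : 0 ≤ A.trace :=
  Finset.sum_nonneg fun i _ => psd_diag_nonneg hA i

lemma pd_diag_pos {A : Matrix m m ℝ} (hA : A.PosDef) (i : m) : 0 < A i i := by
  have := hA.dotProduct_mulVec_pos (x := Pi.single i 1) (by simp [Pi.single_eq_same, Function.ne_iff])
  simpa [dotProduct, mulVec, Pi.single_apply] using this

lemma pd_trace_pos [Nonempty m] {A : Matrix m m ℝ} (hA : A.PosDef) : 0 < A.trace :=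
  Finset.sum_pos (fun i _ => pd_diag_pos hA i) ⟨Classical.arbitrary m, Finset.mem_univ _⟩

/-- trace of product of two PSD matrices is nonneg -/
lemma psd_trace_mul_nonneg {A B : Matrix m m ℝ} (hA : A.PosSemidef) (hB : B.PosSemidef) :
    0 ≤ (A * B).trace := by
  have h1 : A = CFC.sqrt A * CFC.sqrt A := (CFC.sqrt_mul_sqrt_self A hA.nonneg).symm
  have h2 : (A * B).trace = (CFC.sqrt A * B * CFC.sqrt A).trace := by
    conv_lhs => rw [h1]
    rw [mul_assoc, trace_mul_comm]
  rw [h2]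
  have hpsd : (CFC.sqrt A * B * CFC.sqrt A).PosSemidef := by
    have := hB.conjTranspose_mul_mul_same (CFC.sqrt A)
    rwa [(CFC.sqrt_nonneg A).posSemidef.isHermitian.eq] at this
  exact psd_trace_nonneg hpsd

/-- a hermitian matrix is ≤ its largest eigenvalue times the identity -/
lemma smul_one_sub_psd {A : Matrix m m ℝ} (hA : A.IsHermitian) {c : ℝ}
    (hc : ∀ i, hA.eigenvalues i ≤ c) : (c • (1 : Matrix m m ℝ) - A).PosSemidef := by
  have hU : (hA.eigenvectorUnitary : Matrix m m ℝ) * (star hA.eigenvectorUnitary : Matrix m m ℝ)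
      = 1 := Matrix.mem_unitaryGroup_iff.mp hA.eigenvectorUnitary.2
  have hdiag : (diagonal fun i => c - hA.eigenvalues i) =
      c • (1 : Matrix m m ℝ) - diagonal (RCLike.ofReal ∘ hA.eigenvalues) := by
    rw [← diagonal_one, ← diagonal_smul, diagonal_sub]
    congr 1
    ext i
    simp [RCLike.ofReal]
  have key : c • (1 : Matrix m m ℝ) - A =
      (hA.eigenvectorUnitary : Matrix m m ℝ) *
        (diagonal fun i => c - hA.eigenvalues i) *
        (star hA.eigenvectorUnitary : Matrix m m ℝ) := by
    conv_lhs => rw [hA.spectral_theorem, Unitary.conjStarAlgAut_apply]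
    rw [hdiag, Matrix.mul_sub, Matrix.sub_mul, Matrix.mul_smul, Matrix.mul_one,
      Matrix.smul_mul, hU]
  rw [key]
  have hd : (diagonal fun i => c - hA.eigenvalues i).PosSemidef :=
    PosSemidef.diagonal fun i => sub_nonneg.mpr (hc i)
  have := hd.mul_mul_conjTranspose_same (hA.eigenvectorUnitary : Matrix m m ℝ)
  simpa [Matrix.star_eq_conjTranspose] using this

end Aux

/-- For symmetric positive definite H̄, the matrix
    P = (n / trace(H̄⁻¹)) • H̄⁻¹ is symmetric positive definite, has trace n,
    P H̄ = (n / trace(H̄⁻¹)) • 1 (so its largest eigenvalue is n / trace(H̄⁻¹)),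
    and this is minimal among symmetric positive definite Q commuting with H̄
    with trace(Q) = n. -/
theorem stmt_8 {n : ℕ} (hn : 0 < n) (H : Matrix (Fin n) (Fin n) ℝ)
    (hHsymm : H.IsSymm) (hH : H.PosDef) :
    let P : Matrix (Fin n) (Fin n) ℝ := ((n : ℝ) / (H⁻¹).trace) • H⁻¹
    P.IsSymm ∧ P.PosDef ∧ P.trace = (n : ℝ) ∧
    P * H = ((n : ℝ) / (H⁻¹).trace) • (1 : Matrix (Fin n) (Fin n) ℝ) ∧
    (∀ hPH : (P * H).IsHermitian,
      (⨆ i, hPH.eigenvalues i) = (n : ℝ) / (H⁻¹).trace) ∧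
    (∀ Q : Matrix (Fin n) (Fin n) ℝ, Q.IsSymm → Q.PosDef →
      Q * H = H * Q → Q.trace = (n : ℝ) →
      ∀ hQH : (Q * H).IsHermitian,
        (n : ℝ) / (H⁻¹).trace ≤ ⨆ i, hQH.eigenvalues i) := by
  intro P
  haveI : Nonempty (Fin n) := ⟨⟨0, hn⟩⟩
  have hHinv : (H⁻¹).PosDef := hH.inv
  have htr : 0 < (H⁻¹).trace := pd_trace_pos hHinv
  set c : ℝ := (n : ℝ) / (H⁻¹).trace with hc
  have hcpos : 0 < c := div_pos (by exact_mod_cast hn) htr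
  have hHinvSymm : (H⁻¹).IsSymm := by
    have := hHinv.isHermitian
    rwa [IsHermitian, conjTranspose_eq_transpose_of_trivial] at this
  have hPsymm : P.IsSymm := hHinvSymm.smul c
  have hPpd : P.PosDef := by
    refine PosDef.of_dotProduct_mulVec_pos ?_ fun x hx => ?_
    · rw [IsHermitian, conjTranspose_eq_transpose_of_trivial]; exact hPsymm
    · have := hHinv.dotProduct_mulVec_pos hx
      simp only [P, Matrix.smul_mulVec, dotProduct_smul, smul_eq_mul]
      exact mul_pos hcpos this
  have hPtrace : P.trace = (n : ℝ) := by
    simp only [P, trace_smul, smul_eq_mul]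
    exact div_mul_cancel₀ _ htr.ne'
  have hPH1 : P * H = c • (1 : Matrix (Fin n) (Fin n) ℝ) := by
    simp only [P, Matrix.smul_mul]
    rw [Matrix.nonsing_inv_mul H (isUnit_iff_ne_zero.mpr hH.det_pos.ne')]
  refine ⟨hPsymm, hPpd, hPtrace, hPH1, ?_, ?_⟩
  · intro hPH
    have heig : ∀ i, hPH.eigenvalues i = c := by
      intro i
      have hmul : ∀ x : Fin n → ℝ, (P * H) *ᵥ x = c • x := by
        intro x
        rw [hPH1]
        ext j
        simp [Matrix.smul_mulVec]
      have hveq := hPH.mulVec_eigenvectorBasis i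
      rw [hmul] at hveq
      have hvne : ⇑(hPH.eigenvectorBasis i) ≠ 0 := by
        intro h0
        have := hPH.eigenvectorBasis.orthonormal.1 i
        rw [show (hPH.eigenvectorBasis i : EuclideanSpace ℝ (Fin n)) = 0 from by
          ext j; exact congrFun h0 j] at this
        simp at this
      obtain ⟨j, hj⟩ := Function.ne_iff.mp hvne
      have := congrFun hveq j
      simp only [Pi.smul_apply, smul_eq_mul] at this
      exact (mul_right_cancel₀ hj (by linarith)).symm
    simp only [heig]
    exact ciSup_const
  · intro Q hQsymm hQpd hQcomm hQtrace hQH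
    set lam : ℝ := ⨆ i, hQH.eigenvalues i with hlam
    have hle : ∀ i, hQH.eigenvalues i ≤ lam := fun i =>
      le_ciSup (Finite.bddAbove_range _) i
    have hpsd : (lam • (1 : Matrix (Fin n) (Fin n) ℝ) - Q * H).PosSemidef :=
      smul_one_sub_psd hQH hle
    have hkey : 0 ≤ ((lam • (1 : Matrix (Fin n) (Fin n) ℝ) - Q * H) * H⁻¹).trace :=
      psd_trace_mul_nonneg hpsd hHinv.posSemidef
    have hexp : ((lam • (1 : Matrix (Fin n) (Fin n) ℝ) - Q * H) * H⁻¹).trace =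
        lam * (H⁻¹).trace - (n : ℝ) := by
      rw [Matrix.sub_mul, trace_sub, Matrix.smul_mul, Matrix.one_mul, trace_smul,
        mul_assoc, Matrix.mul_nonsing_inv H (isUnit_iff_ne_zero.mpr hH.det_pos.ne'),
        Matrix.mul_one, hQtrace]
      rfl
    rw [hexp] at hkey
    rw [hc, div_le_iff₀ htr]
    linarith
end

section
/- Suppose g_1,...,g_m are vectors in R^n, η_1,...,η_m ∈ (0, η_m_max], P is symmetric positive definite, H̄ is symmetric positive semidefinite, and L_0 ≥ ∑_{i=1}^m η_i g_i^T P g_i. Then (1/2) (∑_{i=1}^m η_i g_i)^T P H̄ P (∑_{i=1}^m η_i g_i) ≤ (1/2) m η_m_max σ_max(P H̄) L_0. -/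
open Matrix Finset

lemma mulVec_dot {k : ℕ} (M : Matrix (Fin k) (Fin k) ℝ) (a b : Fin k → ℝ) :
    (M *ᵥ a) ⬝ᵥ b = a ⬝ᵥ (Mᵀ *ᵥ b) := by
  rw [dotProduct_comm, dotProduct_mulVec, dotProduct_comm, mulVec_transpose]

lemma rayleigh_bound {k : ℕ} [NeZero k] (S : Matrix (Fin k) (Fin k) ℝ)
    (hS : S.IsHermitian) (x : Fin k → ℝ) :
    x ⬝ᵥ S *ᵥ x ≤ (⨆ i, hS.eigenvalues i) * (x ⬝ᵥ x) := by
  set σ := ⨆ i, hS.eigenvalues i with hσ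
  have hle : ∀ i, hS.eigenvalues i ≤ σ := fun i =>
    le_ciSup (Set.Finite.bddAbove (Set.finite_range _)) i
  set U : Matrix (Fin k) (Fin k) ℝ := (hS.eigenvectorUnitary : Matrix (Fin k) (Fin k) ℝ) with hU
  set y := star U *ᵥ x with hy
  have hUt : Uᵀ = star U := by
    rw [Matrix.star_eq_conjTranspose, Matrix.conjTranspose]
    ext i j; simp [Matrix.map_apply]
  have hyy : y ⬝ᵥ y = x ⬝ᵥ x := by
    rw [hy, mulVec_dot, mulVec_mulVec]
    have h1 : (star U)ᵀ * star U = 1 := by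
      have h2 : U * star U = 1 := mem_unitaryGroup_iff.mp (hS.eigenvectorUnitary).2
      calc (star U)ᵀ * star U = U * star U := by
            rw [← hUt, transpose_transpose]
        _ = 1 := h2
    rw [h1, one_mulVec]
  have hq : x ⬝ᵥ S *ᵥ x = ∑ i, hS.eigenvalues i * (y i)^2 := by
    conv_lhs => rw [hS.spectral_theorem, Unitary.conjStarAlgAut_apply]
    rw [← mulVec_mulVec, ← mulVec_mulVec, dotProduct_comm, mulVec_dot]
    rw [hUt, ← hy, dotProduct_comm]
    simp only [dotProduct, mulVec_diagonal, Function.comp_apply, RCLike.ofReal_real_eq_id, id_eq]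
    exact Finset.sum_congr rfl fun i _ => by ring
  rw [hq, ← hyy]
  have hexp : (σ : ℝ) * (y ⬝ᵥ y) = ∑ i, σ * (y i)^2 := by
    simp [dotProduct, Finset.mul_sum, sq]
  rw [hexp]
  exact Finset.sum_le_sum fun i _ =>
    mul_le_mul_of_nonneg_right (hle i) (sq_nonneg _)

open scoped ComplexOrder in
/-- The positive semidefinite square root of a positive semidefinite matrix, as defined in
Mathlib (December 2024) and since removed. -/
noncomputable def Matrix.PosSemidef.sqrt {n 𝕜 : Type*} [Fintype n] [DecidableEq n] [RCLike 𝕜]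
    {A : Matrix n n 𝕜} (hA : A.PosSemidef) : Matrix n n 𝕜 :=
  hA.1.eigenvectorUnitary.1 * diagonal ((↑) ∘ (√·) ∘ hA.1.eigenvalues) *
  (star hA.1.eigenvectorUnitary : Matrix n n 𝕜)

lemma Matrix.PosSemidef.sqrt_isHermitian_port {k : ℕ} {A : Matrix (Fin k) (Fin k) ℝ}
    (hA : A.PosSemidef) : hA.sqrt.IsHermitian := by
  unfold Matrix.PosSemidef.sqrt Matrix.IsHermitian
  rw [conjTranspose_mul, conjTranspose_mul, diagonal_conjTranspose]
  have h1 : (star (hA.1.eigenvectorUnitary : Matrix (Fin k) (Fin k) ℝ))ᴴ =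
      (hA.1.eigenvectorUnitary : Matrix (Fin k) (Fin k) ℝ) := by
    rw [← star_eq_conjTranspose, star_star]
  have h2 : ((hA.1.eigenvectorUnitary : Matrix (Fin k) (Fin k) ℝ))ᴴ =
      star (hA.1.eigenvectorUnitary : Matrix (Fin k) (Fin k) ℝ) :=
    (star_eq_conjTranspose _).symm
  rw [h1, h2, star_trivial, Matrix.mul_assoc]

lemma Matrix.PosSemidef.sqrt_mul_self_port {k : ℕ} {A : Matrix (Fin k) (Fin k) ℝ}
    (hA : A.PosSemidef) : hA.sqrt * hA.sqrt = A := by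
  unfold Matrix.PosSemidef.sqrt
  conv_rhs => rw [hA.1.spectral_theorem, Unitary.conjStarAlgAut_apply]
  have hu : (star hA.1.eigenvectorUnitary : Matrix (Fin k) (Fin k) ℝ) *
      (hA.1.eigenvectorUnitary : Matrix (Fin k) (Fin k) ℝ) = 1 :=
    Unitary.coe_star_mul_self _
  have hd : diagonal ((RCLike.ofReal : ℝ → ℝ) ∘ (√·) ∘ hA.1.eigenvalues) *
      diagonal ((RCLike.ofReal : ℝ → ℝ) ∘ (√·) ∘ hA.1.eigenvalues) =
      diagonal ((RCLike.ofReal : ℝ → ℝ) ∘ hA.1.eigenvalues) := by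
    rw [diagonal_mul_diagonal]
    congr 1; funext i
    simp [Real.mul_self_sqrt (hA.eigenvalues_nonneg i)]
  calc _ = (hA.1.eigenvectorUnitary : Matrix (Fin k) (Fin k) ℝ) *
        diagonal ((RCLike.ofReal : ℝ → ℝ) ∘ (√·) ∘ hA.1.eigenvalues) *
        ((star hA.1.eigenvectorUnitary : Matrix (Fin k) (Fin k) ℝ) *
        (hA.1.eigenvectorUnitary : Matrix (Fin k) (Fin k) ℝ)) *
        diagonal ((RCLike.ofReal : ℝ → ℝ) ∘ (√·) ∘ hA.1.eigenvalues) *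
        (star hA.1.eigenvectorUnitary : Matrix (Fin k) (Fin k) ℝ) := by
          simp only [Matrix.mul_assoc]
    _ = _ := by rw [hu, Matrix.mul_one, Matrix.mul_assoc _ (diagonal _) (diagonal _), hd]

/-- Upper bound on the recursive least loss:
    (1/2)(∑ η_i g_i)ᵀ P H̄ P (∑ η_i g_i) ≤ (1/2) m η_max σ_max(P H̄) L₀,
    where σ_max(P H̄) is the largest eigenvalue of P^{1/2} H̄ P^{1/2} and
    L₀ ≥ ∑ η_i g_iᵀ P g_i. -/
theorem stmt_11 {n m : ℕ} (hn : 0 < n) (P H : Matrix (Fin n) (Fin n) ℝ)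
    (hPsymm : P.IsSymm) (hP : P.PosDef) (hH : H.PosSemidef)
    (hS : (hP.posSemidef.sqrt * H * hP.posSemidef.sqrt).IsHermitian)
    (g : Fin m → (Fin n → ℝ)) (η : Fin m → ℝ) (ηmax : ℝ)
    (hη : ∀ i, 0 < η i ∧ η i ≤ ηmax) (L₀ : ℝ)
    (hL₀ : (∑ i, η i * ((g i) ⬝ᵥ P.mulVec (g i))) ≤ L₀) :
    (1 / 2 : ℝ) * ((∑ i, η i • g i) ⬝ᵥ (P * H * P).mulVec (∑ i, η i • g i)) ≤
      (1 / 2 : ℝ) * m * ηmax * (⨆ i, hS.eigenvalues i) * L₀ := by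
  haveI : NeZero n := ⟨hn.ne'⟩
  set Q := hP.posSemidef.sqrt with hQdef
  set S := Q * H * Q with hSdef
  set v : Fin n → ℝ := ∑ i, η i • g i with hv
  set σ := ⨆ i, hS.eigenvalues i with hσ
  have hQsymm : Qᵀ = Q := by
    have := hP.posSemidef.sqrt_isHermitian_port
    rw [← conjTranspose_eq_transpose_of_trivial]; exact this
  have hQQ : Q * Q = P := hP.posSemidef.sqrt_mul_self_port
  -- S is PSD
  have hSpsd : S.PosSemidef := by
    have h := hH.mul_mul_conjTranspose_same Q
    rw [(hP.posSemidef.sqrt_isHermitian_port : Qᴴ = Q)] at h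
    rw [hSdef]; exact h
  -- σ ≥ 0
  have hσ0 : 0 ≤ σ := le_trans (hSpsd.eigenvalues_nonneg ⟨0, hn⟩)
    (le_ciSup (Set.Finite.bddAbove (Set.finite_range _)) _)
  -- nonneg quadratic forms
  have hq0 : ∀ x : Fin n → ℝ, 0 ≤ x ⬝ᵥ P *ᵥ x := fun x => by
    have := hP.posSemidef.dotProduct_mulVec_nonneg x; simpa using this
  -- key: w := Q v
  set w := Q *ᵥ v with hw
  have hdot : ∀ a : Fin n → ℝ, (Q *ᵥ a) ⬝ᵥ (Q *ᵥ a) = a ⬝ᵥ P *ᵥ a := fun a => by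
    rw [mulVec_dot, hQsymm, mulVec_mulVec, hQQ]
  have hmain : v ⬝ᵥ (P * H * P) *ᵥ v = w ⬝ᵥ S *ᵥ w := by
    have : P * H * P = Q * (S * Q) := by
      rw [hSdef, ← hQQ]; noncomm_ring
    rw [this, ← mulVec_mulVec, dotProduct_comm, mulVec_dot, hQsymm, hw, ← mulVec_mulVec,
      dotProduct_comm]
  -- Rayleigh
  have hray : w ⬝ᵥ S *ᵥ w ≤ σ * (w ⬝ᵥ w) := rayleigh_bound S hS w
  -- Cauchy-Schwarz
  have hw_eq : w = ∑ i, η i • (Q *ᵥ g i) := by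
    rw [hw, hv, show Q *ᵥ (∑ i, η i • g i) = Q.mulVecLin (∑ i, η i • g i) from rfl,
      map_sum]
    simp [Matrix.mulVecLin_apply, mulVec_smul]
  have hcs : w ⬝ᵥ w ≤ m * ∑ i, (η i)^2 * (g i ⬝ᵥ P *ᵥ g i) := by
    have h1 : w ⬝ᵥ w = ∑ j, (∑ i, η i * (Q *ᵥ g i) j)^2 := by
      rw [hw_eq]; simp [dotProduct, Finset.sum_apply, sq]
    have h2 : ∀ j, (∑ i, η i * (Q *ᵥ g i) j)^2 ≤ m * ∑ i, (η i * (Q *ᵥ g i) j)^2 := by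
      intro j
      have := sq_sum_le_card_mul_sum_sq (s := (univ : Finset (Fin m)))
        (f := fun i => η i * (Q *ᵥ g i) j)
      simpa using this
    calc w ⬝ᵥ w ≤ ∑ j, (m : ℝ) * ∑ i, (η i * (Q *ᵥ g i) j)^2 := by
          rw [h1]; exact Finset.sum_le_sum fun j _ => h2 j
      _ = m * ∑ i, (η i)^2 * ((Q *ᵥ g i) ⬝ᵥ (Q *ᵥ g i)) := by
          rw [← Finset.mul_sum, Finset.sum_comm]
          congr 1
          exact Finset.sum_congr rfl fun i _ => by
            simp only [dotProduct, Finset.mul_sum]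
            exact Finset.sum_congr rfl fun j _ => by ring
      _ = m * ∑ i, (η i)^2 * (g i ⬝ᵥ P *ᵥ g i) := by
          congr 1; exact Finset.sum_congr rfl fun i _ => by rw [hdot]
  have hsum : ∑ i, (η i)^2 * (g i ⬝ᵥ P *ᵥ g i) ≤ ηmax * ∑ i, η i * (g i ⬝ᵥ P *ᵥ g i) := by
    rw [Finset.mul_sum]
    refine Finset.sum_le_sum fun i _ => ?_
    have h := hη i
    have hq := hq0 (g i)
    calc (η i)^2 * (g i ⬝ᵥ P *ᵥ g i) = η i * (η i * (g i ⬝ᵥ P *ᵥ g i)) := by ring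
      _ ≤ ηmax * (η i * (g i ⬝ᵥ P *ᵥ g i)) :=
          mul_le_mul_of_nonneg_right h.2 (mul_nonneg h.1.le hq)
  rcases Nat.eq_zero_or_pos m with hm | hm
  · subst hm
    have hv0 : v = 0 := by rw [hv]; simp
    rw [hv0]; simp
  · have hηmax : 0 < ηmax := lt_of_lt_of_le (hη ⟨0, hm⟩).1 (hη ⟨0, hm⟩).2
    have hL0' : (0:ℝ) ≤ L₀ := le_trans (Finset.sum_nonneg fun i _ =>
      mul_nonneg (hη i).1.le (hq0 (g i))) hL₀
    have chain : v ⬝ᵥ (P * H * P) *ᵥ v ≤ σ * (m * ηmax * L₀) := by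
      rw [hmain]
      refine hray.trans ?_
      refine mul_le_mul_of_nonneg_left ?_ hσ0
      calc w ⬝ᵥ w ≤ m * ∑ i, (η i)^2 * (g i ⬝ᵥ P *ᵥ g i) := hcs
        _ ≤ m * (ηmax * ∑ i, η i * (g i ⬝ᵥ P *ᵥ g i)) :=
            mul_le_mul_of_nonneg_left hsum (Nat.cast_nonneg m)
        _ ≤ m * (ηmax * L₀) := by
            refine mul_le_mul_of_nonneg_left ?_ (Nat.cast_nonneg m)
            exact mul_le_mul_of_nonneg_left hL₀ hηmax.le
        _ = m * ηmax * L₀ := by ring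
    calc (1/2 : ℝ) * (v ⬝ᵥ (P * H * P) *ᵥ v) ≤ (1/2 : ℝ) * (σ * (m * ηmax * L₀)) := by
          linarith [chain]
      _ = (1/2 : ℝ) * m * ηmax * σ * L₀ := by ring
end
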